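/- Let M be a set of vectors in F_2^n such that M contains a basis of F_2^n, the zero vector is in M, and |M| < 2^n. If k is a positive integer with k+1 <= |M| <= 2^(n/k), then there exists an M-sum-free subset K of M with |K| >= k+1. -/

import Mathlib

lemma pad_aux {V : Type*} [AddCommMonoid V] [DecidableEq V] (M : Finset V) (h0 : (0:V) ∈ M) :
    ∀ (j : ℕ) (K : Finset V), K ⊆ M → K.card ≤ j →
      ∃ f : Fin j → ↥M, ∑ i, (f i : V) = ∑ v ∈ K, v
  | 0, K, _, hc => by
      have hK : K = ∅ := Finset.card_eq_zero.mp (Nat.le_zero.mp hc)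
      subst hK
      exact ⟨Fin.elim0, by simp⟩
  | (j+1), K, hKM, hc => by
      rcases K.eq_empty_or_nonempty with rfl | ⟨a, ha⟩
      · exact ⟨fun _ => ⟨0, h0⟩, by simp⟩
      · obtain ⟨g, hg⟩ := pad_aux M h0 j (K.erase a) ((K.erase_subset a).trans hKM)
          (by have := Finset.card_erase_of_mem ha; omega)
        refine ⟨Fin.cases ⟨a, hKM ha⟩ g, ?_⟩
        rw [Fin.sum_univ_succ]
        simp only [Fin.cases_zero, Fin.cases_succ]
        rw [hg]
        exact Finset.add_sum_erase K id ha

theorem stmt11 (n k : ℕ) (M : Finset (Fin n → ZMod 2))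
    (hspan : Submodule.span (ZMod 2) (M : Set (Fin n → ZMod 2)) = ⊤)
    (hzero : (0 : Fin n → ZMod 2) ∈ M)
    (hlt : M.card < 2 ^ n)
    (hk : 1 ≤ k)
    (hlow : k + 1 ≤ M.card)
    (hup : (M.card : ℝ) ≤ 2 ^ ((n : ℝ) / k)) :
    ∃ K ⊆ M, k + 1 ≤ K.card ∧ ∀ K' ⊆ K, 2 ≤ K'.card → (∑ v ∈ K', v) ∉ M := by
  classical
  have hself : ∀ y : Fin n → ZMod 2, y + y = 0 := fun y => by
    ext i; exact CharTwo.add_self_eq_zero (y i)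
  -- every vector is a subset sum of M
  have hrep : ∀ x : Fin n → ZMod 2, ∃ K ⊆ M, ∑ v ∈ K, v = x := by
    intro x
    have hx : x ∈ Submodule.span (ZMod 2) (M : Set (Fin n → ZMod 2)) := hspan ▸ Submodule.mem_top
    rw [Submodule.mem_span_finset] at hx
    obtain ⟨c, -, hc⟩ := hx
    refine ⟨M.filter (fun v => c v = 1), Finset.filter_subset _ _, ?_⟩
    rw [← hc, Finset.sum_filter]
    refine Finset.sum_congr rfl fun v _ => ?_
    rcases (by decide : ∀ a : ZMod 2, a = 0 ∨ a = 1) (c v) with h | h <;> rw [h] <;> simp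
  -- the set of sums of ≤ k elements, as image of tuple sums
  set F : (Fin k → ↥M) → (Fin n → ZMod 2) := fun f => ∑ i, (f i : Fin n → ZMod 2) with hF
  set D : Finset (Fin n → ZMod 2) := Finset.image F Finset.univ with hD
  have hcard_univ : (Finset.univ : Finset (Fin k → ↥M)).card = M.card ^ k := by
    simp [Finset.card_univ]
  -- M.card ^ k ≤ 2 ^ n
  have hmk : M.card ^ k ≤ 2 ^ n := by
    have h0 : (0:ℝ) ≤ (M.card : ℝ) := by positivity
    have h1 : ((M.card : ℝ)) ^ k ≤ ((2:ℝ) ^ ((n : ℝ) / k)) ^ k := pow_le_pow_left₀ h0 hup k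
    have hk0 : ((k:ℝ)) ≠ 0 := by positivity
    have h2 : ((2:ℝ) ^ ((n : ℝ) / k)) ^ k = (2:ℝ) ^ (n : ℕ) := by
      rw [← Real.rpow_natCast ((2:ℝ) ^ ((n : ℝ) / k)) k, ← Real.rpow_mul (by norm_num),
        div_mul_cancel₀ _ hk0, Real.rpow_natCast]
    rw [h2] at h1
    exact_mod_cast h1
  have hDlt : D.card < 2 ^ n := by
    rcases eq_or_lt_of_le hmk with heq | hlt'
    · -- equality case: k ≥ 2, find two tuples with the same sum
      have hk1 : k ≠ 1 := by
        intro h; rw [h, pow_one] at heq; omega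
      have hk2 : 2 ≤ k := by omega
      obtain ⟨a, haM, ha0⟩ := Finset.exists_mem_ne (by omega : 1 < M.card) 0
      set i0 : Fin k := ⟨0, by omega⟩ with hi0
      set i1 : Fin k := ⟨1, by omega⟩ with hi1
      have hne01 : i0 ≠ i1 := by simp [hi0, hi1, Fin.ext_iff]
      set f0 : Fin k → ↥M := fun _ => ⟨0, hzero⟩ with hf0
      set g0 : Fin k → ↥M := fun i => if i = i0 ∨ i = i1 then ⟨a, haM⟩ else ⟨0, hzero⟩ with hg0
      have hne : f0 ≠ g0 := by
        intro h
        have := congrFun h i0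
        simp [hf0, hg0] at this
        exact ha0 this.symm
      have hFeq : F f0 = F g0 := by
        have h1 : F f0 = 0 := by simp [hF, hf0]
        have h2 : F g0 = a + a := by
          have hsplit : ∀ i : Fin k, ((g0 i : Fin n → ZMod 2)) =
              (if i = i0 then a else 0) + (if i = i1 then a else 0) := by
            intro i
            by_cases e0 : i = i0
            · have e1 : i ≠ i1 := by rw [e0]; exact hne01
              simp [hg0, e0, e1]
              exact fun h => absurd h hne01
            · by_cases e1 : i = i1
              · simp [hg0, e0, e1]
                exact fun h => absurd h.symm hne01
              · simp [hg0, e0, e1]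
          simp only [hF, hsplit]
          rw [Finset.sum_add_distrib, Finset.sum_ite_eq' Finset.univ i0 (fun _ => a),
            Finset.sum_ite_eq' Finset.univ i1 (fun _ => a)]
          simp
        rw [h1, h2, hself]
      have hsub : D ⊆ Finset.image F (Finset.univ.erase g0) := by
        intro y hy
        obtain ⟨h, _, rfl⟩ := Finset.mem_image.mp hy
        by_cases hh : h = g0
        · subst hh
          exact Finset.mem_image.mpr ⟨f0, Finset.mem_erase.mpr ⟨hne, Finset.mem_univ _⟩, hFeq⟩
        · exact Finset.mem_image.mpr ⟨h, Finset.mem_erase.mpr ⟨hh, Finset.mem_univ _⟩, rfl⟩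
      have h3 : D.card ≤ (Finset.univ.erase g0).card :=
        le_trans (Finset.card_le_card hsub) (Finset.card_image_le)
      have h4 : (Finset.univ.erase g0).card = M.card ^ k - 1 := by
        rw [Finset.card_erase_of_mem (Finset.mem_univ _), hcard_univ]
      have hm1 : 1 ≤ M.card ^ k := Nat.one_le_pow _ _ (by omega)
      omega
    · calc D.card ≤ (Finset.univ : Finset (Fin k → ↥M)).card := Finset.card_image_le
        _ = M.card ^ k := hcard_univ
        _ < 2 ^ n := hlt'
  -- pick x not a sum of ≤ k elements
  obtain ⟨x, hxD⟩ : ∃ x : Fin n → ZMod 2, x ∉ D := by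
    by_contra h
    push_neg at h
    have hDu : D = Finset.univ := Finset.eq_univ_iff_forall.mpr h
    rw [hDu, Finset.card_univ] at hDlt
    have : Fintype.card (Fin n → ZMod 2) = 2 ^ n := by
      simp [Fintype.card_fun]
    omega
  -- minimal representation of x
  set P := M.powerset.filter (fun K => ∑ v ∈ K, v = x) with hP
  have hPne : P.Nonempty := by
    obtain ⟨K, hKM, hKs⟩ := hrep x
    exact ⟨K, Finset.mem_filter.mpr ⟨Finset.mem_powerset.mpr hKM, hKs⟩⟩
  obtain ⟨K, hKP, hKmin⟩ := Finset.exists_min_image P Finset.card hPne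
  have hKM : K ⊆ M := Finset.mem_powerset.mp (Finset.mem_filter.mp hKP).1
  have hKx : ∑ v ∈ K, v = x := (Finset.mem_filter.mp hKP).2
  have hKcard : k + 1 ≤ K.card := by
    by_contra h
    push_neg at h
    obtain ⟨f, hf⟩ := pad_aux M hzero k K hKM (by omega)
    exact hxD (Finset.mem_image.mpr ⟨f, Finset.mem_univ f, by rw [hF]; simp only; rw [hf, hKx]⟩)
  refine ⟨K, hKM, hKcard, ?_⟩
  intro K' hK' hK'2 hm0
  set m0 := ∑ v ∈ K', v with hm0def
  have hsd : ∑ v ∈ K \ K', v + m0 = x := by rw [hm0def, Finset.sum_sdiff hK', hKx]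
  by_cases hmem : m0 ∈ K \ K'
  · set L := (K \ K').erase m0 with hL
    have hLM : L ⊆ M := (Finset.erase_subset _ _).trans (Finset.sdiff_subset.trans hKM)
    have hLsum : ∑ v ∈ L, v = x := by
      have h1 : m0 + ∑ v ∈ L, v = ∑ v ∈ K \ K', v := Finset.add_sum_erase _ id hmem
      rw [← h1] at hsd
      calc ∑ v ∈ L, v = m0 + ∑ v ∈ L, v + m0 := by
            rw [add_comm m0, add_assoc, hself, add_zero]
        _ = x := hsd
    have hLP : L ∈ P := Finset.mem_filter.mpr ⟨Finset.mem_powerset.mpr hLM, hLsum⟩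
    have h2 : L.card = (K \ K').card - 1 := by rw [hL]; exact Finset.card_erase_of_mem hmem
    have h3 : (K \ K').card = K.card - K'.card := Finset.card_sdiff_of_subset hK'
    have h4 := Finset.card_le_card hK'
    have h5 := hKmin L hLP
    have h6 : 1 ≤ (K \ K').card := Finset.card_pos.mpr ⟨m0, hmem⟩
    omega
  · set L := insert m0 (K \ K') with hL
    have hLM : L ⊆ M := by
      intro v hv
      rcases Finset.mem_insert.mp hv with rfl | hv
      · exact hm0
      · exact hKM (Finset.sdiff_subset hv)
    have hLsum : ∑ v ∈ L, v = x := by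
      rw [hL, Finset.sum_insert hmem, add_comm, hsd]
    have hLP : L ∈ P := Finset.mem_filter.mpr ⟨Finset.mem_powerset.mpr hLM, hLsum⟩
    have h2 : L.card = (K \ K').card + 1 := by rw [hL]; exact Finset.card_insert_of_notMem hmem
    have h3 : (K \ K').card = K.card - K'.card := Finset.card_sdiff_of_subset hK'
    have h4 := Finset.card_le_card hK'
    have := hKmin L hLP
    omega
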